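/- arXiv:1002.1192 — 3 statements merged into one kernel-verified Lean document; each statement's English description precedes it below -/
import Mathlib

section
/- Let Γ and Σ be connected simple graphs on m and n vertices respectively, with m ≤ n and with the same Euler characteristic χ = (number of vertices) − (number of edges). Then there is a finite sequence of operations, each operation being either an edge slide, or deletion of a vertex of degree 1 together with its incident edge, or the removal of a vertex y of degree 2 whose two neighbors x and z are distinct and non-adjacent together with its two incident edges followed by the addition of the edge zx, which transforms Σ into a graph isomorphic to Γ. -/
/-- An edge slide: given distinct vertices `x, y, z` with `x ~ y`, `y ~ z` and `x ≁ z`,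
slide the edge `xy` to `xz`. -/
def EdgeSlide {V : Type*} (G G' : SimpleGraph V) : Prop :=
  ∃ x y z : V, x ≠ z ∧ G.Adj x y ∧ G.Adj y z ∧ ¬ G.Adj x z ∧
    G' = G.deleteEdges {s(x, y)} ⊔ SimpleGraph.fromEdgeSet {s(x, z)}

/-- One step of the collapsing process on a graph with a finite vertex set: either an edge
slide, or deletion of a vertex of degree `1` together with its incident edge (move (iii)),
or removal of a vertex `y` of degree `2` whose two neighbours `x ≠ z` are non-adjacent,
together with its two incident edges, followed by the addition of the edge `zx`
(move (iv)). -/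
def CollapseOrSlideStep (p q : Σ k : ℕ, SimpleGraph (Fin k)) : Prop :=
  (∃ G' : SimpleGraph (Fin p.1), EdgeSlide p.2 G' ∧ q = ⟨p.1, G'⟩) ∨
  (∃ (y : Fin p.1) (H : SimpleGraph (Fin (p.1 - 1))),
    (p.2.neighborSet y).ncard = 1 ∧
    Nonempty (H ≃g p.2.induce {v | v ≠ y}) ∧ q = ⟨p.1 - 1, H⟩) ∨
  (∃ (y x z : Fin p.1) (H : SimpleGraph (Fin (p.1 - 1))),
    x ≠ z ∧ p.2.Adj x y ∧ p.2.Adj z y ∧ ¬ p.2.Adj x z ∧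
    p.2.neighborSet y = {x, z} ∧
    Nonempty (H ≃g (p.2 ⊔ SimpleGraph.fromEdgeSet {s(x, z)}).induce {v | v ≠ y}) ∧
    q = ⟨p.1 - 1, H⟩)

open SimpleGraph

variable {V : Type*}

/-- Replace edge `e` by `f`. -/
def RepCS (G : SimpleGraph V) (e f : Sym2 V) : SimpleGraph V :=
  G.deleteEdges {e} ⊔ SimpleGraph.fromEdgeSet {f}

lemma repCS_edgeSet (G : SimpleGraph V) (e : Sym2 V) {f : Sym2 V} (hf : ¬ f.IsDiag) :
    (RepCS G e f).edgeSet = insert f (G.edgeSet \ {e}) := by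
  rw [RepCS, edgeSet_sup, edgeSet_deleteEdges, edgeSet_fromEdgeSet]
  ext t
  simp only [Set.mem_union, Set.mem_diff, Set.mem_singleton_iff, Set.mem_insert_iff,
    Set.mem_setOf_eq]
  constructor
  · rintro (h | ⟨rfl, -⟩) <;> tauto
  · rintro (rfl | h) <;> tauto

lemma repCS_adj {G : SimpleGraph V} {e f : Sym2 V} (hf : ¬ f.IsDiag) {a b : V} :
    (RepCS G e f).Adj a b ↔ s(a, b) = f ∨ (G.Adj a b ∧ s(a, b) ≠ e) := by
  rw [← SimpleGraph.mem_edgeSet, repCS_edgeSet _ _ hf]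
  simp [SimpleGraph.mem_edgeSet]

lemma mkSlide {G : SimpleGraph V} {x y z : V} (hxz : x ≠ z) (hxy : G.Adj x y)
    (hyz : G.Adj y z) (hnxz : ¬ G.Adj x z) : EdgeSlide G (RepCS G s(x, y) s(x, z)) :=
  ⟨x, y, z, hxz, hxy, hyz, hnxz, rfl⟩

lemma reachable_of_adj_reachable {G H : SimpleGraph V}
    (h : ∀ a b, G.Adj a b → H.Reachable a b) {u v : V} (r : G.Reachable u v) :
    H.Reachable u v := by
  obtain ⟨p⟩ := r
  induction p with
  | nil => exact Reachable.refl _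
  | cons hadj p ih => exact (h _ _ hadj).trans ih
lemma sup_eq_repCS (G : SimpleGraph V) (e f : Sym2 V) :
    G.deleteEdges {e} ⊔ SimpleGraph.fromEdgeSet {f} = RepCS G e f := rfl

lemma notDiagCS {a b : V} (h : a ≠ b) : ¬ (s(a, b)).IsDiag :=
  fun hd => h (Sym2.mk_isDiag_iff.mp hd)

lemma neCS {a b c d : V} (h1 : ¬(a = c ∧ b = d)) (h2 : ¬(a = d ∧ b = c)) :
    s(a, b) ≠ s(c, d) := by
  intro h; rcases Sym2.eq_iff.mp h with h' | h' <;> [exact h1 h'; exact h2 h']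

lemma edgeSlide_symm {G G' : SimpleGraph V} (h : EdgeSlide G G') : EdgeSlide G' G := by
  obtain ⟨x, y, z, hxz, hxy, hyz, hnxz, rfl⟩ := h
  rw [sup_eq_repCS]
  have hxy' : x ≠ y := hxy.ne
  have hyz' : y ≠ z := hyz.ne
  have hdxz : ¬ (s(x, z)).IsDiag := notDiagCS hxz
  have hdxy : ¬ (s(x, y)).IsDiag := notDiagCS hxy'
  refine ⟨x, z, y, hxy', ?_, ?_, ?_, ?_⟩
  · rw [repCS_adj hdxz]; exact Or.inl rfl
  · rw [repCS_adj hdxz]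
    exact Or.inr ⟨hyz.symm, neCS (fun h => hxz h.1.symm) (fun h => hyz.ne h.1.symm)⟩
  · rw [repCS_adj hdxz]
    rintro (h | ⟨-, hne⟩)
    · exact neCS (fun h' => hyz' h'.2) (fun h' => hxz h'.1) h
    · exact hne rfl
  · rw [sup_eq_repCS, ← SimpleGraph.edgeSet_inj, repCS_edgeSet _ _ hdxy,
      repCS_edgeSet _ _ hdxz]
    have h1 : s(x, z) ∉ G.edgeSet := hnxz
    have h2 : s(x, y) ∈ G.edgeSet := hxy
    have h3 : s(x, y) ≠ s(x, z) := neCS (fun h => hyz' h.2) (fun h => hxz h.1)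
    ext t
    by_cases ht1 : t = s(x, y) <;> by_cases ht2 : t = s(x, z) <;> simp_all

lemma EdgeSlide.connected {G G' : SimpleGraph V} (h : EdgeSlide G G') (hc : G.Connected) :
    G'.Connected := by
  obtain ⟨x, y, z, hxz, hxy, hyz, hnxz, rfl⟩ := h
  rw [sup_eq_repCS]
  have hdxz : ¬ (s(x, z)).IsDiag := notDiagCS hxz
  have hadjxz : (RepCS G s(x, y) s(x, z)).Adj x z := by
    rw [repCS_adj hdxz]; exact Or.inl rfl
  have hadjzy : (RepCS G s(x, y) s(x, z)).Adj z y := by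
    rw [repCS_adj hdxz]
    exact Or.inr ⟨hyz.symm, neCS (fun h => hxz h.1.symm) (fun h => hyz.ne h.1.symm)⟩
  have key : ∀ a b, G.Adj a b → (RepCS G s(x, y) s(x, z)).Reachable a b := by
    intro a b hab
    by_cases hab' : s(a, b) = s(x, y)
    · rcases Sym2.eq_iff.mp hab' with ⟨rfl, rfl⟩ | ⟨rfl, rfl⟩
      · exact hadjxz.reachable.trans hadjzy.reachable
      · exact (hadjxz.reachable.trans hadjzy.reachable).symm
    · refine SimpleGraph.Adj.reachable ?_
      rw [repCS_adj hdxz]; exact Or.inr ⟨hab, hab'⟩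
  rw [connected_iff] at hc ⊢
  exact ⟨fun u v => reachable_of_adj_reachable key (hc.1 u v), hc.2⟩

def DomCS (v0 : V) (G : SimpleGraph V) : Prop := ∀ w, w ≠ v0 → G.Adj v0 w

lemma DomCS.connected {v0 : V} {G : SimpleGraph V} (h : DomCS v0 G) : G.Connected := by
  have hr : ∀ u, G.Reachable v0 u := by
    intro u
    by_cases hu : u = v0
    · subst hu; exact SimpleGraph.Reachable.refl u
    · exact (h u hu).reachable
  rw [connected_iff]
  exact ⟨fun u v => (hr u).symm.trans (hr v), ⟨v0⟩⟩

lemma frontierCS {G : SimpleGraph V} {T : Set V} {u w : V} (p : G.Walk u w) :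
    u ∈ T → w ∉ T → ∃ a ∈ T, ∃ b, b ∉ T ∧ G.Adj a b := by
  induction p with
  | nil => intro hu hw; exact absurd hu hw
  | @cons a b c h p ih =>
    intro hu hw
    by_cases hb : b ∈ T
    · exact ih hb hw
    · exact ⟨a, hu, b, hb, h⟩
lemma repCS_ncard [Finite V] {G : SimpleGraph V} {e f : Sym2 V} (he : e ∈ G.edgeSet)
    (hf : f ∉ G.edgeSet) (hfd : ¬ f.IsDiag) :
    (RepCS G e f).edgeSet.ncard = G.edgeSet.ncard := by
  rw [repCS_edgeSet _ _ hfd]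
  exact Set.ncard_exchange hf he

lemma to_dom [Finite V] (v0 : V) :
    ∀ (k : ℕ) (G : SimpleGraph V), G.Connected →
      {w | w ≠ v0 ∧ ¬ G.Adj v0 w}.ncard ≤ k →
      ∃ G', Relation.ReflTransGen EdgeSlide G G' ∧ DomCS v0 G' ∧
        G'.edgeSet.ncard = G.edgeSet.ncard := by
  have base : ∀ G : SimpleGraph V, {w | w ≠ v0 ∧ ¬ G.Adj v0 w} = ∅ → DomCS v0 G := by
    intro G h w hw
    by_contra hadj
    exact absurd (h ▸ (⟨hw, hadj⟩ : w ∈ {w | w ≠ v0 ∧ ¬ G.Adj v0 w})) (Set.notMem_empty w)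
  intro k
  induction k with
  | zero =>
    intro G hc h
    refine ⟨G, .refl, base G ?_, rfl⟩
    rw [← Set.ncard_eq_zero (Set.toFinite _)]
    omega
  | succ k ih =>
    intro G hc h
    by_cases hne : {w | w ≠ v0 ∧ ¬ G.Adj v0 w} = ∅
    · exact ⟨G, .refl, base G hne, rfl⟩
    obtain ⟨w0, hw0⟩ := Set.nonempty_iff_ne_empty.mpr hne
    have hv0T : v0 ∈ {v | v = v0 ∨ G.Adj v0 v} := Or.inl rfl
    have hw0T : w0 ∉ {v | v = v0 ∨ G.Adj v0 v} := by
      rintro (h' | h')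
      · exact hw0.1 h'
      · exact hw0.2 h'
    obtain ⟨p⟩ := hc.preconnected v0 w0
    obtain ⟨a, haT, b, hbT, hab⟩ := frontierCS p hv0T hw0T
    have hbv0 : b ≠ v0 := fun h => hbT (Or.inl h)
    have hnvb : ¬ G.Adj v0 b := fun h => hbT (Or.inr h)
    have hav : G.Adj v0 a := by
      rcases haT with h' | h'
      · exact absurd (h' ▸ hab) hnvb
      · exact h'
    have hstep : EdgeSlide G (RepCS G s(b, a) s(b, v0)) :=
      mkSlide hbv0 hab.symm hav.symm (fun h' => hnvb h'.symm)
    set G1 := RepCS G s(b, a) s(b, v0) with hG1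
    have hd : ¬ (s(b, v0)).IsDiag := notDiagCS hbv0
    have hadj1 : ∀ t, t ≠ b → (G1.Adj v0 t ↔ G.Adj v0 t) := by
      intro t ht
      rw [hG1, repCS_adj hd]
      constructor
      · rintro (h' | ⟨h', -⟩)
        · rcases Sym2.eq_iff.mp h' with ⟨h1, h2⟩ | ⟨h1, h2⟩
          · exact absurd h1.symm hbv0
          · exact absurd h2 ht
        · exact h'
      · intro h'
        exact Or.inr ⟨h', neCS (fun h'' => hbv0 h''.1.symm) (fun h'' => ht h''.2)⟩
    have hadj1b : G1.Adj v0 b := by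
      rw [hG1, repCS_adj hd]
      exact Or.inl (Sym2.eq_iff.mpr (Or.inr ⟨rfl, rfl⟩))
    have hset : {w | w ≠ v0 ∧ ¬ G1.Adj v0 w} = {w | w ≠ v0 ∧ ¬ G.Adj v0 w} \ {b} := by
      ext t
      simp only [Set.mem_setOf_eq, Set.mem_diff, Set.mem_singleton_iff]
      constructor
      · rintro ⟨h1, h2⟩
        have htb : t ≠ b := fun h' => h2 (h' ▸ hadj1b)
        rw [hadj1 t htb] at h2
        exact ⟨⟨h1, h2⟩, htb⟩
      · rintro ⟨⟨h1, h2⟩, h3⟩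
        exact ⟨h1, fun h' => h2 ((hadj1 t h3).mp h')⟩
    have hmeas : {w | w ≠ v0 ∧ ¬ G1.Adj v0 w}.ncard ≤ k := by
      rw [hset]
      have hbmem : b ∈ {w | w ≠ v0 ∧ ¬ G.Adj v0 w} := ⟨hbv0, hnvb⟩
      have := Set.ncard_diff_singleton_lt_of_mem hbmem (Set.toFinite _)
      omega
    obtain ⟨G', hsl, hdom, hcard⟩ := ih G1 (hstep.connected hc) hmeas
    refine ⟨G', .head hstep hsl, hdom, ?_⟩
    rw [hcard, hG1, repCS_ncard ((SimpleGraph.mem_edgeSet _).mpr hab.symm)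
      (fun h' => hnvb ((SimpleGraph.mem_edgeSet _).mp h').symm) hd]
lemma moveCS {v0 : V} {G : SimpleGraph V} (hd : DomCS v0 G) {u v w : V}
    (hu : u ≠ v0) (hv : v ≠ v0) (hw : w ≠ v0) (huv : G.Adj u v) (hnw : ¬ G.Adj u w)
    (huw : u ≠ w) :
    Relation.ReflTransGen EdgeSlide G (RepCS G s(u, v) s(u, w)) := by
  have hvw : v ≠ w := fun h => hnw (h ▸ huv)
  have huv' : u ≠ v := huv.ne
  by_cases hadj : G.Adj v w
  · exact .single ⟨u, v, w, huw, huv, hadj, hnw, rfl⟩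
  -- three slides
  have step1 : EdgeSlide G (RepCS G s(w, v0) s(w, v)) :=
    mkSlide hvw.symm (hd w hw).symm (hd v hv) (fun h => hadj h.symm)
  set G1 := RepCS G s(w, v0) s(w, v) with hG1
  have hd1 : ¬ (s(w, v)).IsDiag := notDiagCS hvw.symm
  have h1uv : G1.Adj u v := by
    rw [hG1, repCS_adj hd1]
    exact Or.inr ⟨huv, neCS (fun h => hv h.2) (fun h => hu h.1)⟩
  have h1vw : G1.Adj v w := by
    rw [hG1, repCS_adj hd1]
    exact Or.inl (Sym2.eq_iff.mpr (Or.inr ⟨rfl, rfl⟩))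
  have h1nuw : ¬ G1.Adj u w := by
    rw [hG1, repCS_adj hd1]
    rintro (h | ⟨h, -⟩)
    · exact neCS (fun h' => huw h'.1) (fun h' => huv' h'.1) h
    · exact hnw h
  have step2 : EdgeSlide G1 (RepCS G1 s(u, v) s(u, w)) := mkSlide huw h1uv h1vw h1nuw
  set G2 := RepCS G1 s(u, v) s(u, w) with hG2
  have hd2 : ¬ (s(u, w)).IsDiag := notDiagCS huw
  have h2wv : G2.Adj w v := by
    rw [hG2, repCS_adj hd2]
    exact Or.inr ⟨h1vw.symm, neCS (fun h => huw h.1.symm) (fun h => hvw h.1.symm)⟩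
  have h2vv0 : G2.Adj v v0 := by
    rw [hG2, repCS_adj hd2]
    refine Or.inr ⟨?_, neCS (fun h => huv' h.1.symm) (fun h => hu h.2.symm)⟩
    rw [hG1, repCS_adj hd1]
    exact Or.inr ⟨(hd v hv).symm, neCS (fun h => hvw h.1) (fun h => hv h.1)⟩
  have h2nwv0 : ¬ G2.Adj w v0 := by
    rw [hG2, repCS_adj hd2]
    rintro (h | ⟨h, -⟩)
    · exact neCS (fun h' => huw h'.1.symm) (fun h' => hu h'.2.symm) h
    · rw [hG1, repCS_adj hd1] at h
      rcases h with h | ⟨-, h⟩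
      · exact neCS (fun h' => hv h'.2.symm) (fun h' => hvw h'.1.symm) h
      · exact h rfl
  have step3 : EdgeSlide G2 (RepCS G2 s(w, v) s(w, v0)) := mkSlide hw h2wv h2vv0 h2nwv0
  have hfin : RepCS G2 s(w, v) s(w, v0) = RepCS G s(u, v) s(u, w) := by
    rw [← SimpleGraph.edgeSet_inj, repCS_edgeSet _ _ (notDiagCS hw), hG2,
      repCS_edgeSet _ _ hd2, hG1, repCS_edgeSet _ _ hd1, repCS_edgeSet _ _ hd2]
    have c1 : s(w, v0) ∈ G.edgeSet := (SimpleGraph.mem_edgeSet _).mpr (hd w hw).symm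
    have c2 : s(w, v) ∉ G.edgeSet := fun h =>
      hadj ((SimpleGraph.mem_edgeSet _).mp h).symm
    have c3 : s(u, v) ∈ G.edgeSet := (SimpleGraph.mem_edgeSet _).mpr huv
    have c4 : s(u, w) ∉ G.edgeSet := fun h => hnw ((SimpleGraph.mem_edgeSet _).mp h)
    have d12 : s(w, v0) ≠ s(w, v) := neCS (fun h => hv h.2.symm) (fun h => hvw h.1.symm)
    have d13 : s(w, v0) ≠ s(u, v) := neCS (fun h => huw h.1.symm) (fun h => hu h.2.symm)
    have d14 : s(w, v0) ≠ s(u, w) := neCS (fun h => huw h.1.symm) (fun h => hu h.2.symm)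
    have d23 : s(w, v) ≠ s(u, v) := neCS (fun h => huw h.1.symm) (fun h => hvw h.1.symm)
    have d24 : s(w, v) ≠ s(u, w) := neCS (fun h => huw h.1.symm) (fun h => huv' h.2.symm)
    have d34 : s(u, v) ≠ s(u, w) := neCS (fun h => hvw h.2) (fun h => huw h.1)
    ext t
    by_cases t1 : t = s(w, v0) <;> by_cases t2 : t = s(w, v) <;>
      by_cases t3 : t = s(u, v) <;> by_cases t4 : t = s(u, w) <;>
      simp_all [Set.mem_insert_iff, Set.mem_diff]
  exact .head step1 (.head step2 (.single (hfin ▸ step3)))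

lemma domCS_repCS {v0 : V} {G : SimpleGraph V} (hd : DomCS v0 G) {u v w : V}
    (hu : u ≠ v0) (hv : v ≠ v0) (hw : w ≠ v0) (huw : u ≠ w) :
    DomCS v0 (RepCS G s(u, v) s(u, w)) := by
  intro t ht
  rw [repCS_adj (notDiagCS huw)]
  exact Or.inr ⟨hd t ht, neCS (fun h => hu h.1.symm) (fun h => hv h.1.symm)⟩
lemma exchange_shared {v0 : V} {G : SimpleGraph V} (hd : DomCS v0 G) {u v y : V}
    (hu : u ≠ v0) (hv : v ≠ v0) (hy : y ≠ v0) (ha : G.Adj u v) (hb : ¬ G.Adj u y)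
    (huy : u ≠ y) :
    ∃ G', Relation.ReflTransGen EdgeSlide G G' ∧ DomCS v0 G' ∧
      G'.edgeSet = insert s(u, y) (G.edgeSet \ {s(u, v)}) :=
  ⟨RepCS G s(u, v) s(u, y), moveCS hd hu hv hy ha hb huy,
    domCS_repCS hd hu hv hy huy, repCS_edgeSet _ _ (notDiagCS huy)⟩

lemma exchange_dis1 {v0 : V} {G : SimpleGraph V} (hd : DomCS v0 G) {u v x y : V}
    (hu : u ≠ v0) (hv : v ≠ v0) (hx : x ≠ v0) (hy : y ≠ v0)
    (huv : G.Adj u v) (hb : s(x, y) ∉ G.edgeSet) (hxy : x ≠ y)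
    (hux : u ≠ x) (huy : u ≠ y) (hvx : v ≠ x) (hvy : v ≠ y)
    (hkey : ¬ G.Adj u y) :
    ∃ G', Relation.ReflTransGen EdgeSlide G G' ∧ DomCS v0 G' ∧
      G'.edgeSet = insert s(x, y) (G.edgeSet \ {s(u, v)}) := by
  have m1 := moveCS hd hu hv hy huv hkey huy
  have dom1 := domCS_repCS hd hu hv hy huy
  set G1 := RepCS G s(u, v) s(u, y) with hG1
  have hd1 : ¬ (s(u, y)).IsDiag := notDiagCS huy
  have h1yu : G1.Adj y u := by
    rw [hG1, repCS_adj hd1]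
    exact Or.inl (Sym2.eq_iff.mpr (Or.inr ⟨rfl, rfl⟩))
  have h1nyx : ¬ G1.Adj y x := by
    rw [hG1, repCS_adj hd1]
    rintro (h | ⟨h, -⟩)
    · exact neCS (fun h' => huy h'.1.symm) (fun h' => hux h'.2.symm) h
    · exact hb ((SimpleGraph.mem_edgeSet _).mpr h.symm)
  have hyx : y ≠ x := hxy.symm
  have m2 := moveCS dom1 hy hu hx h1yu h1nyx hyx
  have dom2 := domCS_repCS dom1 hy hu hx hyx
  refine ⟨RepCS G1 s(y, u) s(y, x), m1.trans m2, dom2, ?_⟩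
  rw [repCS_edgeSet _ _ (notDiagCS hyx), hG1, repCS_edgeSet _ _ hd1]
  have e1 : s(y, u) = s(u, y) := Sym2.eq_swap
  have e2 : s(y, x) = s(x, y) := Sym2.eq_swap
  rw [e1, e2]
  have c1 : s(u, y) ∉ G.edgeSet := fun h => hkey ((SimpleGraph.mem_edgeSet _).mp h)
  have c2 : s(u, y) ≠ s(u, v) := neCS (fun h => hvy h.2.symm) (fun h => huv.ne h.1)
  have c3 : s(x, y) ≠ s(u, y) := neCS (fun h => hux h.1.symm) (fun h => hxy h.1)
  ext t
  by_cases t1 : t = s(u, y) <;> by_cases t2 : t = s(u, v) <;> by_cases t3 : t = s(x, y) <;>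
    simp_all [Set.mem_insert_iff, Set.mem_diff]

lemma exchange_dis3 {v0 : V} {G : SimpleGraph V} (hd : DomCS v0 G) {u v x y : V}
    (hu : u ≠ v0) (hv : v ≠ v0) (hx : x ≠ v0) (hy : y ≠ v0)
    (huv : G.Adj u v) (hb : s(x, y) ∉ G.edgeSet) (hxy : x ≠ y)
    (hux : u ≠ x) (huy : u ≠ y) (hvx : v ≠ x) (hvy : v ≠ y)
    (h1 : G.Adj u y) :
    ∃ G', Relation.ReflTransGen EdgeSlide G G' ∧ DomCS v0 G' ∧
      G'.edgeSet = insert s(x, y) (G.edgeSet \ {s(u, v)}) := by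
  have hyx : y ≠ x := hxy.symm
  have hnyx : ¬ G.Adj y x := fun h => hb ((SimpleGraph.mem_edgeSet _).mpr h.symm)
  have m1 := moveCS hd hy hu hx h1.symm hnyx hyx
  have dom1 := domCS_repCS hd hy hu hx hyx
  set G1 := RepCS G s(y, u) s(y, x) with hG1
  have hd1 : ¬ (s(y, x)).IsDiag := notDiagCS hyx
  have h1uv : G1.Adj u v := by
    rw [hG1, repCS_adj hd1]
    exact Or.inr ⟨huv, neCS (fun h => huy h.1) (fun h => hvy h.2)⟩
  have h1nuy : ¬ G1.Adj u y := by
    rw [hG1, repCS_adj hd1]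
    rintro (h | ⟨-, h⟩)
    · exact neCS (fun h' => huy h'.1) (fun h' => hux h'.1) h
    · exact h (Sym2.eq_iff.mpr (Or.inr ⟨rfl, rfl⟩))
  have m2 := moveCS dom1 hu hv hy h1uv h1nuy huy
  have dom2 := domCS_repCS dom1 hu hv hy huy
  refine ⟨RepCS G1 s(u, v) s(u, y), m1.trans m2, dom2, ?_⟩
  rw [repCS_edgeSet _ _ (notDiagCS huy), hG1, repCS_edgeSet _ _ hd1]
  have e1 : s(y, u) = s(u, y) := Sym2.eq_swap
  have e2 : s(y, x) = s(x, y) := Sym2.eq_swap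
  rw [e1, e2]
  have c1 : s(u, y) ∈ G.edgeSet := (SimpleGraph.mem_edgeSet _).mpr h1
  have c2 : s(u, y) ≠ s(u, v) := neCS (fun h => hvy h.2.symm) (fun h => huv.ne h.1)
  have c3 : s(x, y) ≠ s(u, y) := neCS (fun h => hux h.1.symm) (fun h => hxy h.1)
  have c4 : s(x, y) ≠ s(u, v) := neCS (fun h => hux h.1.symm) (fun h => hvx h.1.symm)
  ext t
  by_cases t1 : t = s(u, y) <;> by_cases t2 : t = s(u, v) <;> by_cases t3 : t = s(x, y) <;>
    simp_all [Set.mem_insert_iff, Set.mem_diff]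

lemma exchangeCS {v0 : V} {G : SimpleGraph V} (hd : DomCS v0 G) {a b : Sym2 V}
    (ha : a ∈ G.edgeSet) (hb : b ∉ G.edgeSet) (hbd : ¬ b.IsDiag)
    (hav : v0 ∉ a) (hbv : v0 ∉ b) :
    ∃ G', Relation.ReflTransGen EdgeSlide G G' ∧ DomCS v0 G' ∧
      G'.edgeSet = insert b (G.edgeSet \ {a}) := by
  induction a using Sym2.ind with | _ u v => ?_
  induction b using Sym2.ind with | _ x y => ?_
  have huv : G.Adj u v := (SimpleGraph.mem_edgeSet _).mp ha
  rw [Sym2.mem_iff] at hav hbv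
  push_neg at hav hbv
  have hu : u ≠ v0 := fun h => hav.1 h.symm
  have hv : v ≠ v0 := fun h => hav.2 h.symm
  have hx : x ≠ v0 := fun h => hbv.1 h.symm
  have hy : y ≠ v0 := fun h => hbv.2 h.symm
  have hxy : x ≠ y := fun h => hbd (Sym2.mk_isDiag_iff.mpr h)
  by_cases hux : u = x
  · subst hux
    exact exchange_shared hd hu hv hy huv
      (fun h => hb ((SimpleGraph.mem_edgeSet _).mpr h)) hxy
  by_cases huy : u = y
  · subst huy
    obtain ⟨G', h1, h2, h3⟩ := exchange_shared hd hu hv hx huv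
      (fun h => hb ((SimpleGraph.mem_edgeSet _).mpr h.symm)) (Ne.symm hxy)
    exact ⟨G', h1, h2, by rw [h3, Sym2.eq_swap]⟩
  by_cases hvx : v = x
  · subst hvx
    obtain ⟨G', h1, h2, h3⟩ := exchange_shared hd hv hu hy huv.symm
      (fun h => hb ((SimpleGraph.mem_edgeSet _).mpr h)) hxy
    refine ⟨G', h1, h2, by rw [h3, show s(v, u) = s(u, v) from Sym2.eq_swap]⟩
  by_cases hvy : v = y
  · subst hvy
    obtain ⟨G', h1, h2, h3⟩ := exchange_shared hd hv hu hx huv.symm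
      (fun h => hb ((SimpleGraph.mem_edgeSet _).mpr h.symm)) (Ne.symm hxy)
    refine ⟨G', h1, h2, by
      rw [h3, show s(v, u) = s(u, v) from Sym2.eq_swap,
        show s(v, x) = s(x, v) from Sym2.eq_swap]⟩
  by_cases h1 : G.Adj u y
  · by_cases h2 : G.Adj v x
    · exact exchange_dis3 hd hu hv hx hy huv hb hxy hux huy hvx hvy h1
    · obtain ⟨G', g1, g2, g3⟩ := exchange_dis1 hd hv hu hy hx huv.symm
        (fun h => hb (by rwa [show s(y, x) = s(x, y) from Sym2.eq_swap] at h))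
        (Ne.symm hxy) hvy hvx huy hux h2
      refine ⟨G', g1, g2, by
        rw [g3, show s(y, x) = s(x, y) from Sym2.eq_swap,
          show s(v, u) = s(u, v) from Sym2.eq_swap]⟩
  · exact exchange_dis1 hd hu hv hx hy huv hb hxy hux huy hvx hvy h1
lemma swap_eq_case [Finite V] {G H : SimpleGraph V}
    (hcard : G.edgeSet.ncard = H.edgeSet.ncard) (hsub : G.edgeSet \ H.edgeSet = ∅) :
    G = H := by
  rw [Set.diff_eq_empty] at hsub
  exact SimpleGraph.edgeSet_inj.mp
    (Set.eq_of_subset_of_ncard_le hsub (le_of_eq hcard.symm) (Set.toFinite _))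

lemma swap_master [Finite V] {v0 : V} :
    ∀ (k : ℕ) (G H : SimpleGraph V), DomCS v0 G → DomCS v0 H →
      G.edgeSet.ncard = H.edgeSet.ncard → (G.edgeSet \ H.edgeSet).ncard ≤ k →
      Relation.ReflTransGen EdgeSlide G H := by
  intro k
  induction k with
  | zero =>
    intro G H hdG hdH hcard hdiff
    have : G = H := swap_eq_case hcard (by rw [← Set.ncard_eq_zero (Set.toFinite _)]; omega)
    exact this ▸ .refl
  | succ k ih =>
    intro G H hdG hdH hcard hdiff
    by_cases hempty : G.edgeSet \ H.edgeSet = ∅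
    · exact (swap_eq_case hcard hempty) ▸ .refl
    obtain ⟨a, haG, haH⟩ := Set.nonempty_iff_ne_empty.mpr hempty
    have hHG : (H.edgeSet \ G.edgeSet).Nonempty := by
      by_contra h
      rw [Set.not_nonempty_iff_eq_empty] at h
      have : H = G := swap_eq_case hcard.symm h
      exact haH (this ▸ haG)
    obtain ⟨b, hbH, hbG⟩ := hHG
    have hbd : ¬ b.IsDiag := H.not_isDiag_of_mem_edgeSet hbH
    have hav : v0 ∉ a := by
      intro hmem
      have hspec := Sym2.other_spec hmem
      have hne : Sym2.Mem.other hmem ≠ v0 := by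
        intro h
        exact G.not_isDiag_of_mem_edgeSet haG (by rw [← hspec, h]; exact Sym2.mk_isDiag_iff.mpr rfl)
      exact haH (hspec ▸ (SimpleGraph.mem_edgeSet _).mpr (hdH _ hne))
    have hbv : v0 ∉ b := by
      intro hmem
      have hspec := Sym2.other_spec hmem
      have hne : Sym2.Mem.other hmem ≠ v0 := by
        intro h
        exact hbd (by rw [← hspec, h]; exact Sym2.mk_isDiag_iff.mpr rfl)
      exact hbG (hspec ▸ (SimpleGraph.mem_edgeSet _).mpr (hdG _ hne))
    obtain ⟨G', hsl, hdom, hE⟩ := exchangeCS hdG haG hbG hbd hav hbv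
    have hc' : G'.edgeSet.ncard = H.edgeSet.ncard := by
      rw [hE, Set.ncard_exchange hbG haG]; exact hcard
    have hdiff' : G'.edgeSet \ H.edgeSet = (G.edgeSet \ H.edgeSet) \ {a} := by
      rw [hE]
      ext t
      by_cases htb : t = b <;>
        simp_all [Set.mem_insert_iff, Set.mem_diff, Set.mem_singleton_iff]
      tauto
    have hmeas : (G'.edgeSet \ H.edgeSet).ncard ≤ k := by
      rw [hdiff']
      have hamem : a ∈ G.edgeSet \ H.edgeSet := ⟨haG, haH⟩
      have := Set.ncard_diff_singleton_lt_of_mem hamem (Set.toFinite _)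
      omega
    exact hsl.trans (ih G' H hdom hdH hc' hmeas)

lemma slides_symm {G H : SimpleGraph V} (h : Relation.ReflTransGen EdgeSlide G H) :
    Relation.ReflTransGen EdgeSlide H G :=
  (@Relation.ReflTransGen.stdSymm _ _ ⟨fun _ _ h' => edgeSlide_symm h'⟩).symm _ _ h

lemma slides_of_connected [Finite V] {G H : SimpleGraph V} (hG : G.Connected)
    (hH : H.Connected) (hcard : G.edgeSet.ncard = H.edgeSet.ncard) :
    Relation.ReflTransGen EdgeSlide G H := by
  obtain ⟨v0⟩ := hG.nonempty
  obtain ⟨G', hsG, hdG, hcG⟩ := to_dom v0 _ G hG le_rfl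
  obtain ⟨H', hsH, hdH, hcH⟩ := to_dom v0 _ H hH le_rfl
  have hmid := swap_master _ G' H' hdG hdH (by rw [hcG, hcH, hcard]) le_rfl
  exact (hsG.trans hmid).trans (slides_symm hsH)
/-- The star graph with centre `v0`. -/
def domGraphCS {n : ℕ} (v0 : Fin n) : SimpleGraph (Fin n) where
  Adj a b := a ≠ b ∧ (a = v0 ∨ b = v0)
  symm := ⟨by rintro a b ⟨h1, h2⟩; exact ⟨h1.symm, h2.symm⟩⟩
  loopless := ⟨by rintro a ⟨h1, -⟩; exact h1 rfl⟩

lemma domGraphCS_edgeSet {n : ℕ} (v0 : Fin n) :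
    (domGraphCS v0).edgeSet = (fun w => s(v0, w)) '' {w | w ≠ v0} := by
  ext t
  induction t using Sym2.ind with | _ a b => ?_
  simp only [SimpleGraph.mem_edgeSet, Set.mem_image, Set.mem_setOf_eq]
  constructor
  · rintro ⟨h1, rfl | rfl⟩
    · exact ⟨b, fun h => h1 h.symm, rfl⟩
    · exact ⟨a, fun h => h1 h, Sym2.eq_swap⟩
  · rintro ⟨w, hw, hs⟩
    rcases Sym2.eq_iff.mp hs with ⟨h1, h2⟩ | ⟨h1, h2⟩
    · exact ⟨fun h => hw (h2.trans (h.symm.trans h1.symm)), Or.inl h1.symm⟩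
    · exact ⟨fun h => hw (h2.trans (h.trans h1.symm)), Or.inr h1.symm⟩

lemma starSet_ncard {n : ℕ} (v0 : Fin n) :
    ((fun w => s(v0, w)) '' {w | w ≠ v0}).ncard = n - 1 := by
  rw [Set.ncard_image_of_injOn]
  · have hcompl : {w : Fin n | w ≠ v0} = ({v0} : Set (Fin n))ᶜ := by
      ext w; simp
    rw [hcompl]
    have := Set.ncard_add_ncard_compl ({v0} : Set (Fin n))
    rw [Set.ncard_singleton] at this
    simp only [Nat.card_eq_fintype_card, Fintype.card_fin] at this
    omega
  · intro w hw w' hw' h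
    rcases Sym2.eq_iff.mp h with ⟨-, h2⟩ | ⟨h1, -⟩
    · exact h2
    · exact absurd h1.symm hw'

lemma collapse_target {n : ℕ} (hn : 2 ≤ n) (i : ℕ) (hi : i ≤ (n - 2).choose 2) :
    ∃ T : SimpleGraph (Fin n), DomCS (⟨0, by omega⟩ : Fin n) T ∧
      T.edgeSet.ncard = (n - 1) + i ∧
      T.neighborSet ⟨n - 1, by omega⟩ = {(⟨0, by omega⟩ : Fin n)} := by
  set v0 : Fin n := ⟨0, by omega⟩ with hv0
  set vl : Fin n := ⟨n - 1, by omega⟩ with hvl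
  have hv0l : v0 ≠ vl := by
    intro h
    have := congrArg Fin.val h
    simp only [hv0, hvl] at this
    omega
  -- choose the inner edges
  have hcap : i ≤ ((⊤ : SimpleGraph (Fin (n - 2))).edgeFinset).card := by
    rwa [SimpleGraph.card_edgeFinset_top_eq_card_choose_two, Fintype.card_fin]
  obtain ⟨B₀, hB₀sub, hB₀card⟩ := Finset.exists_subset_card_eq hcap
  set emb : Fin (n - 2) → Fin n := fun j => ⟨j.1 + 1, by omega⟩ with hemb
  have hembinj : Function.Injective emb := by
    intro a b h
    have := congrArg Fin.val h
    simp only [hemb] at this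
    exact Fin.ext (by omega)
  set B : Finset (Sym2 (Fin n)) := B₀.image (Sym2.map emb) with hB
  have hBcard : B.card = i := by
    rw [hB, Finset.card_image_of_injective _ (Sym2.map.injective hembinj), hB₀card]
  have hBprop : ∀ t ∈ B, ¬ t.IsDiag ∧ v0 ∉ t ∧ vl ∉ t := by
    intro t ht
    rw [hB, Finset.mem_image] at ht
    obtain ⟨t₀, ht₀, rfl⟩ := ht
    induction t₀ using Sym2.ind with | _ p q => ?_
    have hpq : p ≠ q := by
      have := SimpleGraph.mem_edgeFinset.mp (hB₀sub ht₀)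
      exact ((SimpleGraph.mem_edgeSet _).mp this).ne
    rw [Sym2.map_pair_eq]
    refine ⟨notDiagCS (fun h => hpq (hembinj h)), ?_, ?_⟩
    · rw [Sym2.mem_iff]
      rintro (h | h) <;> · have := congrArg Fin.val h; simp [hv0, hemb] at this
    · rw [Sym2.mem_iff]
      rintro (h | h) <;>
        · have := congrArg Fin.val h
          simp only [hvl, hemb] at this
          have hq : (p : ℕ) < n - 2 := p.2
          omega
  refine ⟨domGraphCS v0 ⊔ SimpleGraph.fromEdgeSet ↑B, ?_, ?_, ?_⟩
  · intro w hw
    rw [SimpleGraph.sup_adj]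
    exact Or.inl ⟨fun h => hw h.symm, Or.inl rfl⟩
  · rw [SimpleGraph.edgeSet_sup, SimpleGraph.edgeSet_fromEdgeSet, domGraphCS_edgeSet]
    have hBd : (↑B : Set (Sym2 (Fin n))) \ Sym2.diagSet = ↑B := by
      ext t
      simp only [Set.mem_diff, Set.mem_setOf_eq, Sym2.mem_diagSet, Finset.mem_coe, and_iff_left_iff_imp]
      exact fun ht => (hBprop t ht).1
    rw [hBd, Set.ncard_union_eq ?_ (Set.toFinite _) (Set.toFinite _), starSet_ncard,
      Set.ncard_coe_finset, hBcard]
    rw [Set.disjoint_left]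
    rintro t ⟨w, -, rfl⟩ htB
    exact (hBprop _ htB).2.1 (Sym2.mem_iff.mpr (Or.inl rfl))
  · ext w
    simp only [SimpleGraph.mem_neighborSet, SimpleGraph.sup_adj, Set.mem_singleton_iff,
      SimpleGraph.fromEdgeSet_adj]
    constructor
    · rintro (⟨h1, h2 | h2⟩ | ⟨h1, -⟩)
      · exact absurd h2 (Ne.symm hv0l)
      · exact h2
      · exact absurd (Sym2.mem_iff.mpr (Or.inl rfl)) (hBprop _ h1).2.2
    · rintro rfl
      exact Or.inl ⟨Ne.symm hv0l, Or.inr rfl⟩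
lemma collapse_step {n : ℕ} (hn : 2 ≤ n) (T : SimpleGraph (Fin n))
    (hdom : DomCS (⟨0, by omega⟩ : Fin n) T)
    (hnb : T.neighborSet ⟨n - 1, by omega⟩ = {(⟨0, by omega⟩ : Fin n)}) :
    ∃ H : SimpleGraph (Fin (n - 1)),
      CollapseOrSlideStep ⟨n, T⟩ ⟨n - 1, H⟩ ∧
      DomCS (⟨0, by omega⟩ : Fin (n - 1)) H ∧
      H.edgeSet.ncard + 1 = T.edgeSet.ncard := by
  set v0 : Fin n := ⟨0, by omega⟩ with hv0
  set vl : Fin n := ⟨n - 1, by omega⟩ with hvl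
  set ι : Fin (n - 1) → Fin n := fun j => ⟨j.1, by omega⟩ with hι
  have hιinj : Function.Injective ι := by
    intro a b h
    have hv : (ι a).1 = (ι b).1 := congrArg Fin.val h
    exact Fin.ext hv
  have hιne : ∀ j : Fin (n - 1), ι j ≠ vl := by
    intro j h
    have h1 := congrArg Fin.val h
    have h2 := j.2
    simp only [hι, hvl] at h1
    omega
  set H : SimpleGraph (Fin (n - 1)) := T.comap ι with hH
  have hHadj : ∀ a b, H.Adj a b ↔ T.Adj (ι a) (ι b) := fun a b => Iff.rfl
  -- the isomorphism
  have hiso : Nonempty (H ≃g T.induce {v | v ≠ vl}) := by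
    refine ⟨⟨⟨fun j => ⟨ι j, hιne j⟩, fun v => ⟨v.1.1, by
        have h2 : v.1 ≠ vl := v.2
        have h3 : (v.1 : ℕ) ≠ n - 1 := fun h => h2 (Fin.ext h)
        have := v.1.2
        omega⟩, fun j => rfl, fun v => Subtype.ext (Fin.ext rfl)⟩, ?_⟩⟩
    intro a b
    rw [hH]
    exact Iff.rfl
  have hT0l : T.Adj vl v0 := by
    have : v0 ∈ T.neighborSet vl := by rw [hnb]; rfl
    exact this
  have himg : Sym2.map ι '' H.edgeSet = T.edgeSet \ {s(v0, vl)} := by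
    ext t
    constructor
    · rintro ⟨t₀, ht₀, rfl⟩
      induction t₀ using Sym2.ind with | _ a b => ?_
      rw [Sym2.map_pair_eq]
      refine ⟨(SimpleGraph.mem_edgeSet _).mpr ((hHadj a b).mp ht₀), ?_⟩
      intro h
      rcases Sym2.eq_iff.mp h with ⟨-, h2⟩ | ⟨h1, -⟩
      · exact hιne b h2
      · exact hιne a h1
    · intro ht
      induction t using Sym2.ind with | _ a b => ?_
      obtain ⟨ht1, ht2⟩ := ht
      have hadj : T.Adj a b := (SimpleGraph.mem_edgeSet _).mp ht1
      have hal : a ≠ vl := by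
        rintro rfl
        have hmem : b ∈ T.neighborSet vl := hadj
        rw [hnb, Set.mem_singleton_iff] at hmem
        subst hmem
        exact ht2 Sym2.eq_swap
      have hbl : b ≠ vl := by
        rintro rfl
        have hmem : a ∈ T.neighborSet vl := hadj.symm
        rw [hnb, Set.mem_singleton_iff] at hmem
        subst hmem
        exact ht2 rfl
      have ha' : (a : ℕ) < n - 1 := by
        have h3 : (a : ℕ) ≠ n - 1 := fun h => hal (Fin.ext h)
        have := a.2
        omega
      have hb' : (b : ℕ) < n - 1 := by
        have h3 : (b : ℕ) ≠ n - 1 := fun h => hbl (Fin.ext h)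
        have := b.2
        omega
      refine ⟨s(⟨a.1, ha'⟩, ⟨b.1, hb'⟩), ?_, ?_⟩
      · rw [SimpleGraph.mem_edgeSet, hHadj]
        have h1 : ι ⟨a.1, ha'⟩ = a := Fin.ext rfl
        have h2 : ι ⟨b.1, hb'⟩ = b := Fin.ext rfl
        rw [h1, h2]
        exact hadj
      · rw [Sym2.map_pair_eq]
  have hcard : H.edgeSet.ncard + 1 = T.edgeSet.ncard := by
    have h1 : (Sym2.map ι '' H.edgeSet).ncard = H.edgeSet.ncard :=
      Set.ncard_image_of_injective _ (Sym2.map.injective hιinj)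
    have h2 : s(v0, vl) ∈ T.edgeSet := (SimpleGraph.mem_edgeSet _).mpr hT0l.symm
    rw [← h1, himg]
    exact Set.ncard_diff_singleton_add_one h2 (Set.toFinite _)
  refine ⟨H, Or.inr (Or.inl ⟨vl, H, ?_, hiso, rfl⟩), ?_, hcard⟩
  · rw [hnb]
    exact Set.ncard_singleton _
  · intro w hw
    rw [hHadj]
    have h1 : ι ⟨0, by omega⟩ = v0 := Fin.ext rfl
    rw [h1]
    refine hdom (ι w) ?_
    intro h
    have hv : (ι w).1 = v0.1 := congrArg Fin.val h
    exact hw (Fin.ext hv)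
lemma succ_choose_two (p : ℕ) : (p + 1).choose 2 = p.choose 2 + p := by
  rw [Nat.choose_succ_succ, Nat.choose_one_right]; norm_num [Nat.succ_eq_add_one]; omega

lemma choose_auxCS : ∀ a b : ℕ, 1 ≤ a → a ≤ b → a.choose 2 + b ≤ b.choose 2 + a := by
  intro a b ha hab
  induction b, hab using Nat.le_induction with
  | base => omega
  | succ b hab ih =>
    have h1 := succ_choose_two b
    omega

lemma lift_slides {n : ℕ} {S T : SimpleGraph (Fin n)}
    (h : Relation.ReflTransGen EdgeSlide S T) :
    Relation.ReflTransGen CollapseOrSlideStep ⟨n, S⟩ ⟨n, T⟩ := by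
  induction h with
  | refl => exact .refl
  | tail hab hbc ih => exact ih.tail (Or.inl ⟨_, hbc, rfl⟩)

lemma step_lemmaCS {n : ℕ} (hn : 2 ≤ n) (S : SimpleGraph (Fin n)) (hS : S.Connected)
    (hcap : S.edgeSet.ncard ≤ (n - 2).choose 2 + (n - 1)) :
    ∃ H : SimpleGraph (Fin (n - 1)),
      Relation.ReflTransGen CollapseOrSlideStep ⟨n, S⟩ ⟨n - 1, H⟩ ∧ H.Connected ∧
      H.edgeSet.ncard + 1 = S.edgeSet.ncard := by
  obtain ⟨S1, hsl1, hdom1, hc1⟩ := to_dom (⟨0, by omega⟩ : Fin n) _ S hS le_rfl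
  have hsub : ((fun w => s((⟨0, by omega⟩ : Fin n), w)) '' {w | w ≠ ⟨0, by omega⟩})
      ⊆ S1.edgeSet := by
    rintro t ⟨w, hw, rfl⟩
    exact (SimpleGraph.mem_edgeSet _).mpr (hdom1 w hw)
  have hstar : n - 1 ≤ S1.edgeSet.ncard := by
    rw [← starSet_ncard (⟨0, by omega⟩ : Fin n)]
    exact Set.ncard_le_ncard hsub (Set.toFinite _)
  rw [hc1] at hstar
  obtain ⟨T, hdomT, hcT, hnbT⟩ :=
    collapse_target hn (S.edgeSet.ncard - (n - 1)) (by omega)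
  have hTcard : S1.edgeSet.ncard = T.edgeSet.ncard := by rw [hcT, hc1]; omega
  have hslT := swap_master _ S1 T hdom1 hdomT hTcard le_rfl
  obtain ⟨H, hstep, hdomH, hcH⟩ := collapse_step hn T hdomT hnbT
  exact ⟨H, (lift_slides (hsl1.trans hslT)).tail hstep, hdomH.connected,
    by rw [hcH, hcT]; omega⟩

lemma mainCS (m : ℕ) (G : SimpleGraph (Fin m)) (hG : G.Connected) :
    ∀ (k : ℕ) (S : SimpleGraph (Fin (m + k))), S.Connected →
      ((m : ℤ) - Nat.card G.edgeSet = ((m + k : ℕ) : ℤ) - Nat.card S.edgeSet) →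
      Relation.ReflTransGen CollapseOrSlideStep ⟨m + k, S⟩ ⟨m, G⟩ := by
  have hm : 1 ≤ m := Fin.pos_iff_nonempty.mpr hG.nonempty
  have heGc : Nat.card ↥G.edgeSet = G.edgeSet.ncard := Nat.card_coe_set_eq _
  have hG_upper : G.edgeSet.ncard ≤ m.choose 2 := by
    classical
    have h1 := SimpleGraph.card_edgeFinset_le_card_choose_two (G := G)
    rw [Fintype.card_fin] at h1
    rw [SimpleGraph.edgeFinset_card] at h1
    rwa [← Nat.card_coe_set_eq, Nat.card_eq_fintype_card]
  intro k
  induction k with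
  | zero =>
    intro S hS hχ
    have heSc : Nat.card ↥S.edgeSet = S.edgeSet.ncard := Nat.card_coe_set_eq _
    have hcard : S.edgeSet.ncard = G.edgeSet.ncard := by
      push_cast at hχ; omega
    exact lift_slides (slides_of_connected hS hG hcard)
  | succ k ih =>
    intro S hS hχ
    have heSc : Nat.card ↥S.edgeSet = S.edgeSet.ncard := Nat.card_coe_set_eq _
    have heq : S.edgeSet.ncard = G.edgeSet.ncard + (k + 1) := by
      push_cast at hχ; omega
    obtain ⟨p, hp⟩ : ∃ p, m + k = p + 1 := ⟨m + k - 1, by omega⟩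
    have hmono := choose_auxCS m (p + 1) hm (by omega)
    have hcc := succ_choose_two p
    have hcap : S.edgeSet.ncard ≤ (m + (k + 1) - 2).choose 2 + (m + (k + 1) - 1) := by
      have e1 : m + (k + 1) - 2 = p := by omega
      have e2 : m + (k + 1) - 1 = p + 1 := by omega
      rw [e1, e2]
      omega
    obtain ⟨H, hpath, hHconn, hHcard⟩ := step_lemmaCS (by omega) S hS hcap
    have hHc : Nat.card ↥H.edgeSet = H.edgeSet.ncard := Nat.card_coe_set_eq _
    have hχ' : (m : ℤ) - Nat.card ↥G.edgeSet = ((m + k : ℕ) : ℤ) - Nat.card ↥H.edgeSet := by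
      push_cast
      omega
    have hrec := ih H hHconn hχ'
    exact hpath.trans hrec
/-- A connected graph `S` on `n` vertices can be collapsed, by a finite sequence of edge
slides and collapsing moves, to a graph isomorphic to any given connected graph `G` on
`m ≤ n` vertices with the same Euler characteristic. -/
theorem collapse_and_slide (m n : ℕ) (hmn : m ≤ n)
    (G : SimpleGraph (Fin m)) (S : SimpleGraph (Fin n))
    (hG : G.Connected) (hS : S.Connected)
    (hχ : (m : ℤ) - Nat.card G.edgeSet = (n : ℤ) - Nat.card S.edgeSet) :
    ∃ G' : SimpleGraph (Fin m),
      Relation.ReflTransGen CollapseOrSlideStep ⟨n, S⟩ ⟨m, G'⟩ ∧ Nonempty (G' ≃g G) := by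
  obtain ⟨k, rfl⟩ : ∃ k, n = m + k := ⟨n - m, by omega⟩
  exact ⟨G, mainCS m G hG k S hS (by exact_mod_cast hχ), ⟨RelIso.refl _⟩⟩
end

section
/- Let Γ be a simple graph on a finite vertex set, let σ = [s_1, s_2, …, s_k] be a path in Γ (the s_i distinct, with s_i adjacent to s_{i+1} for each i), and let y be a vertex not on σ. Suppose y is adjacent to s_i and y is not adjacent to s_j for some i, j ∈ {1, …, k}. Then, whatever other adjacencies exist between y and the vertices of σ, there is a finite sequence of edge slides transforming Γ into the graph obtained from Γ by deleting the edge y s_i and adding the edge y s_j, with all other adjacencies unchanged (a shuffle of y s_i to y s_j along σ). -/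
-- Auxiliary definitions and lemmas
def swapE {V : Type*} (G : SimpleGraph V) (y a b : V) : SimpleGraph V :=
  G.deleteEdges {s(y, a)} ⊔ SimpleGraph.fromEdgeSet {s(y, b)}

lemma swapE_adj {V : Type*} {G : SimpleGraph V} {y a b u v : V} :
    (swapE G y a b).Adj u v ↔
      (G.Adj u v ∧ s(u, v) ≠ s(y, a)) ∨ (s(u, v) = s(y, b) ∧ u ≠ v) := by
  simp [swapE, SimpleGraph.deleteEdges_adj, SimpleGraph.fromEdgeSet_adj,
    SimpleGraph.sup_adj, Set.mem_singleton_iff]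

lemma adj_of_sym2_eq {V : Type*} {G : SimpleGraph V} {u v a b : V}
    (h : s(u, v) = s(a, b)) (ha : G.Adj u v) : G.Adj a b := by
  rcases Sym2.eq_iff.mp h with ⟨rfl, rfl⟩ | ⟨rfl, rfl⟩
  · exact ha
  · exact ha.symm

lemma slide_swapE {V : Type*} {G : SimpleGraph V} {y a b : V}
    (hab : G.Adj a b) (hya : G.Adj y a) (hyb : ¬ G.Adj y b) (hneb : y ≠ b) :
    EdgeSlide G (swapE G y a b) :=
  ⟨y, a, b, hneb, hya, hab, hyb, rfl⟩

-- lemma C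
lemma swapE_swapE {V : Type*} {G : SimpleGraph V} {y a b c : V}
    (hb : ¬ G.Adj y b) : swapE (swapE G y a b) y b c = swapE G y a c := by
  ext u v
  simp only [swapE_adj]
  constructor
  · rintro (⟨((⟨h1, h2⟩ | ⟨h1, h2⟩)), h3⟩ | ⟨h1, h2⟩)
    · exact Or.inl ⟨h1, h2⟩
    · exact absurd h1 h3
    · exact Or.inr ⟨h1, h2⟩
  · rintro (⟨h1, h2⟩ | ⟨h1, h2⟩)
    · refine Or.inl ⟨Or.inl ⟨h1, h2⟩, ?_⟩
      intro he; exact hb (adj_of_sym2_eq he h1)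
    · exact Or.inr ⟨h1, h2⟩

-- lemma B
lemma swapE_swapE' {V : Type*} {G : SimpleGraph V} {y a b c : V}
    (ha : G.Adj y a) (hac : a ≠ c) (hbc : b ≠ c) :
    swapE (swapE G y a b) y c a = swapE G y c b := by
  ext u v
  simp only [swapE_adj]
  constructor
  · rintro (⟨((⟨h1, h2⟩ | ⟨h1, h2⟩)), h3⟩ | ⟨h1, h2⟩)
    · exact Or.inl ⟨h1, h3⟩
    · exact Or.inr ⟨h1, h2⟩
    · refine Or.inl ⟨adj_of_sym2_eq h1.symm ha, ?_⟩
      intro he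
      exact hac (Sym2.congr_right.mp (h1 ▸ he).symm).symm
  · rintro (⟨h1, h2⟩ | ⟨h1, h2⟩)
    · by_cases he : s(u, v) = s(y, a)
      · exact Or.inr ⟨he, h1.ne⟩
      · exact Or.inl ⟨Or.inl ⟨h1, he⟩, h2⟩
    · refine Or.inl ⟨Or.inr ⟨h1, h2⟩, ?_⟩
      intro he
      exact hbc (Sym2.congr_right.mp (h1 ▸ he).symm).symm

lemma sym2_ne_of_not_mem {V : Type*} {u v y c : V} (h1 : y ≠ u) (h2 : y ≠ v) :
    s(u, v) ≠ s(y, c) := by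
  intro he
  rcases Sym2.eq_iff.mp he with ⟨rfl, rfl⟩ | ⟨rfl, rfl⟩
  · exact h1 rfl
  · exact h2 rfl

lemma clear_slide {V : Type*} (y : V) : ∀ (n : ℕ), 0 < n → ∀ (G : SimpleGraph V) (q : ℕ → V),
    (∀ a ≤ n, ∀ b ≤ n, q a = q b → a = b) →
    (∀ a < n, G.Adj (q a) (q (a + 1))) →
    (∀ a ≤ n, y ≠ q a) →
    G.Adj y (q 0) →
    (∀ t, 0 < t → t ≤ n → ¬ G.Adj y (q t)) →
    Relation.ReflTransGen EdgeSlide G (swapE G y (q 0) (q n)) := by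
  intro n
  induction n with
  | zero => omega
  | succ m ih =>
    intro _ G q hinj hchain hy h0 hclear
    have hslide : EdgeSlide G (swapE G y (q 0) (q 1)) :=
      slide_swapE (hchain 0 (by omega)) h0 (hclear 1 one_pos (by omega)) (hy 1 (by omega))
    rcases Nat.eq_zero_or_pos m with rfl | hm
    · exact Relation.ReflTransGen.single hslide
    · set G1 := swapE G y (q 0) (q 1) with hG1
      have step : Relation.ReflTransGen EdgeSlide G1 (swapE G1 y (q 1) (q (m + 1))) := by
        have := ih hm G1 (fun t => q (t + 1))
          (fun a ha b hb he => by
            have := hinj (a+1) (by omega) (b+1) (by omega) he; omega)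
          (fun a ha => by
            refine swapE_adj.mpr (Or.inl ⟨hchain (a+1) (by omega), ?_⟩)
            exact sym2_ne_of_not_mem (hy (a+1) (by omega)) (hy (a+2) (by omega)))
          (fun a ha => hy (a+1) (by omega))
          (swapE_adj.mpr (Or.inr ⟨rfl, hy 1 (by omega)⟩))
          (fun t ht htm hadj => by
            rcases swapE_adj.mp hadj with ⟨h1, h2⟩ | ⟨h1, h2⟩
            · exact hclear (t+1) (by omega) (by omega) h1
            · have := hinj (t+1) (by omega) 1 (by omega) (Sym2.congr_right.mp h1)
              omega)
        exact this
      have heq : swapE G1 y (q 1) (q (m + 1)) = swapE G y (q 0) (q (m + 1)) :=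
        swapE_swapE (hclear 1 one_pos (by omega))
      exact (Relation.ReflTransGen.single hslide).trans (heq ▸ step)

lemma shuffle_aux {V : Type*} (y : V) : ∀ (n : ℕ) (G : SimpleGraph V) (q : ℕ → V),
    (∀ a ≤ n, ∀ b ≤ n, q a = q b → a = b) →
    (∀ a < n, G.Adj (q a) (q (a + 1))) →
    (∀ a ≤ n, y ≠ q a) →
    G.Adj y (q 0) →
    ¬ G.Adj y (q n) →
    Relation.ReflTransGen EdgeSlide G (swapE G y (q 0) (q n)) := by
  intro n
  induction n using Nat.strong_induction_on with
  | _ n ih =>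
    intro G q hinj hchain hy h0 hn
    rcases Nat.eq_zero_or_pos n with rfl | hnpos
    · exact absurd h0 hn
    classical
    set m := Nat.findGreatest (fun t => G.Adj y (q t)) (n - 1) with hmdef
    have hm : G.Adj y (q m) := Nat.findGreatest_spec (P := fun t => G.Adj y (q t)) (Nat.zero_le _) h0
    have hmle : m ≤ n - 1 := Nat.findGreatest_le _
    have hmax : ∀ t, m < t → t ≤ n → ¬ G.Adj y (q t) := by
      intro t ht htn
      rcases Nat.lt_or_ge t n with h | h
      · exact Nat.findGreatest_is_greatest (P := fun t => G.Adj y (q t)) ht (by omega)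
      · have : t = n := by omega
        exact this ▸ hn
    -- Phase 1 : G →* swapE G y (q m) (q n)
    have phase1 : Relation.ReflTransGen EdgeSlide G (swapE G y (q m) (q n)) := by
      have := clear_slide y (n - m) (by omega) G (fun t => q (m + t))
        (fun a ha b hb he => by
          have := hinj (m+a) (by omega) (m+b) (by omega) he; omega)
        (fun a ha => hchain (m + a) (by omega))
        (fun a ha => hy (m + a) (by omega))
        (by simpa using hm)
        (fun t ht htn => hmax (m + t) (by omega) (by omega))
      try simp only [] at this
      rw [show m + (n - m) = n by omega, show m + 0 = m from rfl] at this
      exact this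
    rcases Nat.eq_zero_or_pos m with hm0 | hmpos
    · rw [hm0] at phase1; exact phase1
    -- Phase 2 : recurse from 0 to m in G1
    set G1 := swapE G y (q m) (q n) with hG1
    have phase2 : Relation.ReflTransGen EdgeSlide G1 (swapE G1 y (q 0) (q m)) := by
      refine ih m (by omega) G1 q
        (fun a ha b hb he => hinj a (by omega) b (by omega) he)
        (fun a ha => swapE_adj.mpr (Or.inl ⟨hchain a (by omega),
          sym2_ne_of_not_mem (hy a (by omega)) (hy (a+1) (by omega))⟩))
        (fun a ha => hy a (by omega))
        (swapE_adj.mpr (Or.inl ⟨h0, fun he => by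
          have := hinj 0 (by omega) m (by omega) (Sym2.congr_right.mp he); omega⟩))
        (fun hadj => by
          rcases swapE_adj.mp hadj with ⟨h1, h2⟩ | ⟨h1, h2⟩
          · exact h2 rfl
          · have := hinj m (by omega) n (by omega) (Sym2.congr_right.mp h1); omega)
    have heq : swapE G1 y (q 0) (q m) = swapE G y (q 0) (q n) :=
      swapE_swapE' hm
        (fun he => by have := hinj m (by omega) 0 (by omega) he; omega)
        (fun he => by have := hinj n (by omega) 0 (by omega) he; omega)
    exact phase1.trans (heq ▸ phase2)


/-- A shuffle: given a path `p 0, p 1, …, p (k-1)` in `G` and a vertex `y` not on the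
path with `y ~ p i` and `y ≁ p j`, whatever other adjacencies exist between `y` and the
vertices of the path, a finite sequence of edge slides transforms `G` into the graph
obtained by deleting the edge `y (p i)` and adding the edge `y (p j)`. -/
theorem shuffle_by_slides {V : Type*} [Fintype V] (G : SimpleGraph V) (k : ℕ)
    (p : Fin k → V) (hinj : Function.Injective p)
    (hchain : ∀ (i : ℕ) (h : i + 1 < k),
      G.Adj (p ⟨i, Nat.lt_of_succ_lt h⟩) (p ⟨i + 1, h⟩))
    (y : V) (hy : y ∉ Set.range p)
    (i j : Fin k) (hi : G.Adj y (p i)) (hj : ¬ G.Adj y (p j)) :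
    Relation.ReflTransGen EdgeSlide G
      (G.deleteEdges {s(y, p i)} ⊔ SimpleGraph.fromEdgeSet {s(y, p j)}) := by
  have hyp : ∀ t : Fin k, y ≠ p t := fun t he => hy ⟨t, he.symm⟩
  have hp : ∀ (a : ℕ) (ha : a < k) (b : ℕ) (hb : b < k), a = b →
      p ⟨a, ha⟩ = p ⟨b, hb⟩ := by
    intro a ha b hb h
    subst h
    rfl
  have hpinj : ∀ (a : ℕ) (ha : a < k) (b : ℕ) (hb : b < k),
      p ⟨a, ha⟩ = p ⟨b, hb⟩ → a = b := by
    intro a ha b hb h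
    have := hinj h
    simpa using this
  rcases Nat.lt_or_ge i.val j.val with hij | hij
  · -- i < j : forward path
    have hik : ∀ t ≤ j.val - i.val, i.val + t < k := fun t ht => by omega
    have key := shuffle_aux y (j.val - i.val) G
      (fun t => if h : i.val + t < k then p ⟨i.val + t, h⟩ else y)
      (fun a ha b hb he => by
        try simp only [] at he
        rw [dif_pos (hik a ha), dif_pos (hik b hb)] at he
        have := hpinj _ _ _ _ he; omega)
      (fun a ha => by
        try simp only []
        rw [dif_pos (hik a (by omega)), dif_pos (hik (a+1) (by omega))]
        exact hchain (i.val + a) (by omega))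
      (fun a ha => by (try simp only []); rw [dif_pos (hik a ha)]; exact hyp _)
      (by (try simp only []); rw [dif_pos (hik 0 (by omega))]; exact hi)
      (by try simp only []
          rw [dif_pos (hik _ le_rfl)]
          rw [hp (i.val + (j.val - i.val)) _ j.val j.isLt (by omega)]
          exact hj)
    try simp only [] at key
    rw [dif_pos (hik 0 (by omega)), dif_pos (hik _ le_rfl)] at key
    rw [show (⟨i.val + 0, hik 0 (by omega)⟩ : Fin k) = i from rfl,
        hp (i.val + (j.val - i.val)) _ j.val j.isLt (by omega),
        show (⟨j.val, j.isLt⟩ : Fin k) = j from rfl] at key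
    exact key
  · rcases Nat.eq_or_lt_of_le hij with heq | hij
    · exact absurd hi (by rwa [show j = i from Fin.ext heq] at hj)
    -- j < i : backward path
    have hik : ∀ t : ℕ, i.val - t < k := fun t => by omega
    have key := shuffle_aux y (i.val - j.val) G
      (fun t => p ⟨i.val - t, hik t⟩)
      (fun a ha b hb he => by
        have := hpinj _ _ _ _ he; omega)
      (fun a ha => by
        have h3 : p ⟨i.val - a - 1 + 1, by omega⟩ = p ⟨i.val - a, hik a⟩ :=
          hp _ _ _ _ (by omega)
        have := (hchain (i.val - a - 1) (by omega)).symm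
        rw [h3] at this
        have h4 : p ⟨i.val - a - 1, by omega⟩ = p ⟨i.val - (a + 1), hik (a+1)⟩ :=
          hp _ _ _ _ (by omega)
        rw [h4] at this
        exact this)
      (fun a ha => hyp _)
      (by try simp only []
          rw [show (⟨i.val - 0, hik 0⟩ : Fin k) = i from rfl]; exact hi)
      (by try simp only []
          rw [hp (i.val - (i.val - j.val)) _ j.val j.isLt (by omega)]; exact hj)
    try simp only [] at key
    rw [show (⟨i.val - 0, hik 0⟩ : Fin k) = i from rfl,
        hp (i.val - (i.val - j.val)) _ j.val j.isLt (by omega),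
        show (⟨j.val, j.isLt⟩ : Fin k) = j from rfl] at key
    exact key
end

section
/- Let Σ be a connected simple graph on n ≥ 2 vertices with f edges, where f ≤ (n − 1)(n − 2)/2 + 1, and let x be any vertex of Σ. Then there exists a finite sequence of edge slides transforming Σ into a connected graph in which x has degree 1; moreover, deleting x and its single incident edge from the resulting graph yields a connected graph on n − 1 vertices. -/
namespace EdgeSlideAux

open SimpleGraph

variable {V : Type*}

lemma slide_adj' (G : SimpleGraph V) (a b c p q : V) :
    (G.deleteEdges {s(a,b)} ⊔ fromEdgeSet {s(a,c)}).Adj p q ↔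
      (G.Adj p q ∧ ¬ s(p,q) = s(a,b)) ∨ (s(p,q) = s(a,c) ∧ p ≠ q) := by
  simp [deleteEdges_adj, fromEdgeSet_adj, sup_adj]

lemma reach_lift {G G' : SimpleGraph V} (h : ∀ p q, G.Adj p q → G'.Reachable p q)
    {p q : V} (hr : G.Reachable p q) : G'.Reachable p q := by
  obtain ⟨w⟩ := hr
  induction w with
  | nil => exact Reachable.refl _
  | cons ha _ ih => exact (h _ _ ha).trans ih

lemma slide_connected {G : SimpleGraph V} {a b c : V} (hab : G.Adj a b) (hbc : G.Adj b c)
    (hac : ¬ G.Adj a c) (hacne : a ≠ c) (hG : G.Connected) :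
    (G.deleteEdges {s(a,b)} ⊔ fromEdgeSet {s(a,c)}).Connected := by
  set G' := G.deleteEdges {s(a,b)} ⊔ fromEdgeSet {s(a,c)} with hG'
  have hAC : G'.Adj a c := by rw [hG', slide_adj']; exact Or.inr ⟨rfl, hacne⟩
  have hBC : G'.Adj b c := by
    rw [hG', slide_adj']
    refine Or.inl ⟨hbc, ?_⟩
    rw [Sym2.eq_iff]
    rintro (⟨h1, h2⟩ | ⟨h1, h2⟩)
    · exact G.irrefl (h1 ▸ hab)
    · exact hacne h2.symm
  have step : ∀ p q, G.Adj p q → G'.Reachable p q := by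
    intro p q hpq
    by_cases he : s(p,q) = s(a,b)
    · rw [Sym2.eq_iff] at he
      rcases he with ⟨rfl, rfl⟩ | ⟨rfl, rfl⟩
      · exact hAC.reachable.trans hBC.symm.reachable
      · exact hBC.reachable.trans hAC.symm.reachable
    · exact Adj.reachable (by rw [hG', slide_adj']; exact Or.inl ⟨hpq, he⟩)
  haveI := hG.nonempty
  exact Connected.mk (fun p q => reach_lift step (hG.preconnected p q))

lemma slide_card [Fintype V] {G : SimpleGraph V} {a b c : V} (hab : G.Adj a b)
    (hac : ¬ G.Adj a c) (hne : a ≠ c) :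
    ((G.deleteEdges {s(a,b)} ⊔ fromEdgeSet {s(a,c)}).edgeSet).ncard = G.edgeSet.ncard := by
  have hdiag : ¬ (s(a,c) : Sym2 V).IsDiag := by simp [hne]
  have hE : (G.deleteEdges {s(a,b)} ⊔ fromEdgeSet {s(a,c)}).edgeSet
      = insert s(a,c) (G.edgeSet \ {s(a,b)}) := by
    rw [edgeSet_sup, edgeSet_deleteEdges, edgeSet_fromEdgeSet]
    ext e
    simp only [Set.mem_union, Set.mem_diff, Set.mem_singleton_iff, Set.mem_insert_iff,
      Set.mem_setOf_eq]
    constructor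
    · rintro (h | ⟨h1, h2⟩)
      · exact Or.inr h
      · exact Or.inl h1
    · rintro (rfl | h)
      · exact Or.inr ⟨rfl, hdiag⟩
      · exact Or.inl h
  rw [hE, Set.ncard_insert_of_notMem (by simp [mem_edgeSet, hac]) (Set.toFinite _),
    Set.ncard_diff_singleton_add_one (by rwa [mem_edgeSet]) (Set.toFinite _)]

lemma slide_offx (G : SimpleGraph V) {x : V} (y w : V) {p q : V} (hp : p ≠ x) (hq : q ≠ x) :
    ((G.deleteEdges {s(x,y)} ⊔ fromEdgeSet {s(x,w)}).Adj p q ↔ G.Adj p q) := by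
  rw [slide_adj', Sym2.eq_iff, Sym2.eq_iff]
  constructor
  · rintro (⟨h, -⟩ | ⟨(⟨rfl, rfl⟩ | ⟨rfl, rfl⟩), h2⟩)
    · exact h
    · exact absurd rfl hp
    · exact absurd rfl hq
  · intro h
    refine Or.inl ⟨h, ?_⟩
    rintro (⟨rfl, rfl⟩ | ⟨rfl, rfl⟩)
    · exact hp rfl
    · exact hq rfl

lemma token_nbhd (G : SimpleGraph V) {x y w : V} (hxy : G.Adj x y) (hxw : x ≠ w) :
    (G.deleteEdges {s(x,y)} ⊔ fromEdgeSet {s(x,w)}).neighborSet x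
      = insert w (G.neighborSet x \ {y}) := by
  have hxyne : x ≠ y := hxy.ne
  ext v
  simp only [mem_neighborSet, Set.mem_insert_iff, Set.mem_diff, Set.mem_singleton_iff]
  rw [slide_adj', Sym2.eq_iff, Sym2.eq_iff]
  constructor
  · rintro (⟨h1, h2⟩ | ⟨(⟨-, rfl⟩ | ⟨rfl, rfl⟩), h3⟩)
    · refine Or.inr ⟨h1, fun hv => h2 (Or.inl ⟨rfl, hv⟩)⟩
    · exact Or.inl rfl
    · exact absurd rfl hxw
  · rintro (rfl | ⟨h1, h2⟩)
    · exact Or.inr ⟨Or.inl ⟨rfl, rfl⟩, hxw⟩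
    · refine Or.inl ⟨h1, ?_⟩
      rintro (⟨-, rfl⟩ | ⟨rfl, -⟩)
      · exact h2 rfl
      · exact hxyne rfl

lemma reduce_nbhd (G : SimpleGraph V) {x y z : V} (hxy : G.Adj x y) (hxz : G.Adj x z) :
    (G.deleteEdges {s(y,x)} ⊔ fromEdgeSet {s(y,z)}).neighborSet x = G.neighborSet x \ {y} := by
  have hxyne : x ≠ y := hxy.ne
  have hxzne : x ≠ z := hxz.ne
  ext v
  simp only [mem_neighborSet, Set.mem_diff, Set.mem_singleton_iff]
  rw [slide_adj', Sym2.eq_iff, Sym2.eq_iff]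
  constructor
  · rintro (⟨h1, h2⟩ | ⟨(⟨h3, -⟩ | ⟨h3, -⟩), -⟩)
    · exact ⟨h1, fun hv => h2 (Or.inr ⟨rfl, hv⟩)⟩
    · exact absurd h3 hxyne
    · exact absurd h3 hxzne
  · rintro ⟨h1, h2⟩
    refine Or.inl ⟨h1, ?_⟩
    rintro (⟨h3, -⟩ | ⟨-, h4⟩)
    · exact hxyne h3
    · exact h2 h4

lemma token_step [Fintype V] {G : SimpleGraph V} {x y w : V} (hxy : G.Adj x y)
    (hyw : G.Adj y w) (hxw : ¬ G.Adj x w) (hxwne : x ≠ w) (hc : G.Connected) :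
    ∃ G' : SimpleGraph V, EdgeSlide G G' ∧ G'.Connected ∧
      G'.neighborSet x = insert w (G.neighborSet x \ {y}) ∧
      (∀ p q, p ≠ x → q ≠ x → (G'.Adj p q ↔ G.Adj p q)) ∧
      G'.edgeSet.ncard = G.edgeSet.ncard :=
  ⟨G.deleteEdges {s(x,y)} ⊔ fromEdgeSet {s(x,w)},
    ⟨x, y, w, hxwne, hxy, hyw, hxw, rfl⟩,
    slide_connected hxy hyw hxw hxwne hc, token_nbhd G hxy hxwne,
    fun p q hp hq => slide_offx G y w hp hq, slide_card hxy hxw hxwne⟩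

lemma reduce_step [Fintype V] {G : SimpleGraph V} {x y z : V} (hxy : G.Adj x y)
    (hxz : G.Adj x z) (hyz : ¬ G.Adj y z) (hne : y ≠ z) (hc : G.Connected) :
    ∃ G' : SimpleGraph V, EdgeSlide G G' ∧ G'.Connected ∧
      G'.neighborSet x = G.neighborSet x \ {y} ∧
      G'.edgeSet.ncard = G.edgeSet.ncard :=
  ⟨G.deleteEdges {s(y,x)} ⊔ fromEdgeSet {s(y,z)},
    ⟨y, x, z, hne, hxy.symm, hxz, hyz, rfl⟩,
    slide_connected hxy.symm hxz hyz hne hc, reduce_nbhd G hxy hxz,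
    slide_card hxy.symm hyz hne⟩

lemma walk_to_adj {G : SimpleGraph V} {S : Set V} {x : V}
    (hT : ∀ v, G.Adj x v → v ∈ S) (hc : G.Connected) {u : V}
    (hu : u ∉ S) (hux : u ≠ x) :
    ∃ a s, a ∉ S ∧ a ≠ x ∧ s ∈ S ∧ G.Adj a s := by
  have key : ∀ n (u : V), u ∉ S → u ≠ x → ∀ w : G.Walk u x, w.length ≤ n →
      ∃ a s, a ∉ S ∧ a ≠ x ∧ s ∈ S ∧ G.Adj a s := by
    intro n
    induction n with
    | zero =>
      intro u hu hux w hw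
      exact absurd (w.eq_of_length_eq_zero (Nat.le_zero.mp hw)) hux
    | succ n ih =>
      intro u hu hux w hw
      cases w with
      | nil => exact absurd rfl hux
      | @cons _ c _ h p =>
        by_cases hcS : c ∈ S
        · exact ⟨u, c, hu, hux, hcS, h⟩
        · by_cases hcx : c = x
          · subst hcx
            exact absurd (hT u h.symm) hu
          · exact ih c hcS hcx p (by
              simp only [SimpleGraph.Walk.length_cons] at hw; omega)
  obtain ⟨w⟩ := hc.preconnected u x
  exact key w.length u hu hux w le_rfl

lemma pendant_connected {G : SimpleGraph V} (hG : G.Connected) {x y : V}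
    (hN : G.neighborSet x = {y}) : (G.induce {v | v ≠ x}).Connected := by
  have hyx : y ≠ x := by
    have h : y ∈ G.neighborSet x := by rw [hN]; rfl
    exact (G.ne_of_adj h.symm)
  have key : ∀ n (a b : V) (ha : a ≠ x) (hb : b ≠ x) (w : G.Walk a b), w.length ≤ n →
      (G.induce {v | v ≠ x}).Reachable ⟨a, ha⟩ ⟨b, hb⟩ := by
    intro n
    induction n with
    | zero =>
      intro a b ha hb w hw
      have : a = b := w.eq_of_length_eq_zero (Nat.le_zero.mp hw)
      subst this
      rfl
    | succ n ih =>
      intro a b ha hb w hw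
      cases w with
      | nil => rfl
      | @cons _ c _ h p =>
        by_cases hcx : c = x
        · subst hcx
          have hay : a = y := by
            have h2 : a ∈ G.neighborSet c := h.symm
            rw [hN] at h2; exact h2
          cases p with
          | nil => exact absurd rfl hb
          | @cons _ c2 _ h2 p2 =>
            have hc2 : c2 = y := by
              have h3 : c2 ∈ G.neighborSet c := h2
              rw [hN] at h3; exact h3
            have h3 : a = c2 := hay.trans hc2.symm
            subst h3
            exact ih a b ha hb p2 (by
              simp only [SimpleGraph.Walk.length_cons] at hw
              omega)
        · have hstep : (G.induce {v | v ≠ x}).Adj ⟨a, ha⟩ ⟨c, hcx⟩ := by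
            simp [comap_adj, h]
          exact (hstep.reachable).trans (ih c b hcx hb p (by
            simp only [SimpleGraph.Walk.length_cons] at hw; omega))
  haveI : Nonempty {v | v ≠ x} := ⟨⟨y, hyx⟩⟩
  refine Connected.mk ?_
  rintro ⟨a, ha⟩ ⟨b, hb⟩
  obtain ⟨w⟩ := hG.preconnected a b
  exact key w.length a b ha hb w le_rfl

lemma exists_max_clique [Finite V] (G : SimpleGraph V) (x : V)
    (hT : G.IsClique (G.neighborSet x)) :
    ∃ S : Set V, G.IsClique S ∧ G.neighborSet x ⊆ S ∧ x ∉ S ∧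
      ∀ u, u ∉ S → u ≠ x → ∃ s' ∈ S, s' ≠ u ∧ ¬ G.Adj u s' := by
  obtain ⟨S, ⟨hScl, hTS, hxS⟩, hmax⟩ :=
    Set.Finite.exists_maximalFor (id : Set V → Set V)
      {A | G.IsClique A ∧ G.neighborSet x ⊆ A ∧ x ∉ A} (Set.toFinite _)
      ⟨G.neighborSet x, hT, le_refl _, fun h => G.irrefl h⟩
  refine ⟨S, hScl, hTS, hxS, fun u huS hux => ?_⟩
  by_contra hcon
  push_neg at hcon
  have hclq : G.IsClique (insert u S) := by
    rw [isClique_insert]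
    exact ⟨hScl, fun b hb hub => hcon b hb (Ne.symm hub)⟩
  have heq : S = insert u S := le_antisymm (Set.subset_insert _ _) <|
    hmax ⟨hclq, hTS.trans (Set.subset_insert _ _),
      fun h => h.elim (fun hxu => hux hxu.symm) hxS⟩ (Set.subset_insert _ _)
  exact huS (heq ▸ Set.mem_insert u S)

lemma clique_contra [Fintype V] {G : SimpleGraph V} {x : V}
    (hn : 2 ≤ Fintype.card V)
    (hS : ∀ a b : V, a ≠ x → b ≠ x → a ≠ b → G.Adj a b)
    (hd : 2 ≤ (G.neighborSet x).ncard)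
    (hf : G.edgeSet.ncard ≤ (Fintype.card V - 1) * (Fintype.card V - 2) / 2 + 1) :
    False := by
  classical
  set n := Fintype.card V with hn'
  have hdeg : ∀ v : V, v ≠ x → n - 2 + (if G.Adj x v then 1 else 0) ≤ G.degree v := by
    intro v hv
    have hsub : (Finset.univ.erase x).erase v ⊆ G.neighborFinset v := by
      intro w hw
      obtain ⟨hwv, hw2⟩ := Finset.mem_erase.mp hw
      obtain ⟨hwx, -⟩ := Finset.mem_erase.mp hw2
      exact (mem_neighborFinset ..).mpr (hS v w hv hwx (fun h => hwv h.symm))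
    have hcard : ((Finset.univ.erase x).erase v).card = n - 2 := by
      rw [Finset.card_erase_of_mem (by simp [hv]), Finset.card_erase_of_mem (by simp),
        Finset.card_univ, ← hn']
      omega
    by_cases hadj : G.Adj x v
    · have hsub2 : insert x ((Finset.univ.erase x).erase v) ⊆ G.neighborFinset v := by
        intro w hw
        rcases Finset.mem_insert.mp hw with rfl | hw
        · exact (mem_neighborFinset ..).mpr hadj.symm
        · exact hsub hw
      rw [if_pos hadj]
      calc n - 2 + 1 = (insert x ((Finset.univ.erase x).erase v)).card := by
            rw [Finset.card_insert_of_notMem (by simp), hcard]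
        _ ≤ G.degree v := Finset.card_le_card hsub2
    · rw [if_neg hadj, add_zero, ← hcard]
      exact Finset.card_le_card hsub
  have hdx : (G.neighborFinset x).card = (G.neighborSet x).ncard := by
    rw [neighborFinset_def, Set.ncard_eq_toFinset_card']
  have hsum : ∑ v : V, G.degree v = G.degree x + ∑ v ∈ Finset.univ.erase x, G.degree v := by
    rw [← Finset.add_sum_erase _ _ (Finset.mem_univ x)]
  have hsum2 : ∑ v ∈ Finset.univ.erase x, ((n-2) + (if G.Adj x v then 1 else 0))
      ≤ ∑ v ∈ Finset.univ.erase x, G.degree v :=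
    Finset.sum_le_sum (fun v hv => hdeg v (Finset.mem_erase.mp hv).1)
  have hfilt : (Finset.univ.erase x).filter (fun v => G.Adj x v) = G.neighborFinset x := by
    ext w
    simp only [Finset.mem_filter, Finset.mem_erase, Finset.mem_univ, and_true, true_and,
      mem_neighborFinset]
    exact ⟨fun h => h.2, fun h => ⟨h.ne', h⟩⟩
  have hsplit : ∑ v ∈ Finset.univ.erase x, ((n-2) + (if G.Adj x v then 1 else 0))
      = (n-1) * (n-2) + (G.neighborFinset x).card := by
    rw [Finset.sum_add_distrib, Finset.sum_const, Finset.card_erase_of_mem (by simp),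
      Finset.card_univ, ← hn', smul_eq_mul, Finset.sum_boole, hfilt, Nat.cast_id]
  have hdegx : G.degree x = (G.neighborFinset x).card := rfl
  have hE : G.edgeSet.ncard = G.edgeFinset.card := by
    rw [Set.ncard_eq_toFinset_card']
    congr 1
  have htwice := G.sum_degrees_eq_twice_card_edges
  have hdge : 2 ≤ (G.neighborFinset x).card := by rw [hdx]; exact hd
  have hbig : (n-1) * (n-2) + 4 ≤ 2 * G.edgeFinset.card := by
    rw [← htwice, hsum, hdegx]
    omega
  rw [hE] at hf
  omega

lemma degree_reduce [Fintype V] {G : SimpleGraph V} {x : V}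
    (hn : 2 ≤ Fintype.card V) (hc : G.Connected) (hd : 2 ≤ (G.neighborSet x).ncard)
    (hf : G.edgeSet.ncard ≤ (Fintype.card V - 1) * (Fintype.card V - 2) / 2 + 1) :
    ∃ G' : SimpleGraph V, Relation.ReflTransGen EdgeSlide G G' ∧ G'.Connected ∧
      (G'.neighborSet x).ncard + 1 = (G.neighborSet x).ncard ∧
      G'.edgeSet.ncard = G.edgeSet.ncard := by
  by_cases hcl : ∃ y ∈ G.neighborSet x, ∃ z ∈ G.neighborSet x, y ≠ z ∧ ¬ G.Adj y z
  · obtain ⟨y, hy, z, hz, hyz, hnadj⟩ := hcl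
    obtain ⟨G', hsl, hconn, hN, hE⟩ := reduce_step hy hz hnadj hyz hc
    refine ⟨G', Relation.ReflTransGen.single hsl, hconn, ?_, hE⟩
    rw [hN]
    exact Set.ncard_diff_singleton_add_one hy (Set.toFinite _)
  · push_neg at hcl
    have hclq : G.IsClique (G.neighborSet x) := fun y hy z hz hyz => hcl y hy z hz hyz
    obtain ⟨S, hScl, hTS, hxS, hmaxS⟩ := exists_max_clique G x hclq
    by_cases hall : ∀ v : V, v ≠ x → v ∈ S
    · exact (clique_contra hn
        (fun a b ha hb hab => hScl (hall a ha) (hall b hb) hab) hd hf).elim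
    · push_neg at hall
      obtain ⟨v₀, h0x, h0S⟩ := hall
      obtain ⟨u, s, huS, hux, hsS, hus⟩ := walk_to_adj (fun v hv => hTS hv) hc h0S h0x
      obtain ⟨s', hs'S, hs'u, hnus'⟩ := hmaxS u huS hux
      have hxu : ¬ G.Adj x u := fun h => huS (hTS h)
      have hs'x : s' ≠ x := fun h => hxS (h ▸ hs'S)
      -- Step a: get a state G₁ with s ∈ N₁ ⊆ S
      have stepA : ∃ G₁ : SimpleGraph V, Relation.ReflTransGen EdgeSlide G G₁ ∧ G₁.Connected ∧
          s ∈ G₁.neighborSet x ∧ G₁.neighborSet x ⊆ S ∧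
          (G₁.neighborSet x).ncard = (G.neighborSet x).ncard ∧
          (∀ p q, p ≠ x → q ≠ x → (G₁.Adj p q ↔ G.Adj p q)) ∧
          G₁.edgeSet.ncard = G.edgeSet.ncard := by
        by_cases hs : s ∈ G.neighborSet x
        · exact ⟨G, .refl, hc, hs, hTS, rfl, fun _ _ _ _ => Iff.rfl, rfl⟩
        · have hNne : (G.neighborSet x).Nonempty := by
            rw [← Set.ncard_pos (Set.toFinite _)]
            omega
          obtain ⟨y, hy⟩ := hNne
          have hys : G.Adj y s := hScl (hTS hy) hsS (fun h => hs (h ▸ hy))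
          have hxsne : x ≠ s := fun h => hxS (h ▸ hsS)
          obtain ⟨G₁, hsl, hconn, hN₁, hoff, hE₁⟩ := token_step hy hys hs hxsne hc
          refine ⟨G₁, .single hsl, hconn, ?_, ?_, ?_, hoff, hE₁⟩
          · rw [hN₁]; exact Set.mem_insert _ _
          · rw [hN₁]
            rintro v (rfl | ⟨hv, -⟩)
            · exact hsS
            · exact hTS hv
          · have h1 : s ∉ G.neighborSet x \ {y} := fun h => hs h.1
            rw [hN₁, Set.ncard_insert_of_notMem h1 (Set.toFinite _),
              Set.ncard_diff_singleton_add_one hy (Set.toFinite _)]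
      obtain ⟨G₁, hrt1, hc1, hsN1, hN1S, hcard1, hoff1, hE1⟩ := stepA
      -- Step b: slide the token from s to u
      have hsx : s ≠ x := fun h => hxS (h ▸ hsS)
      have hadj1su : G₁.Adj s u := (hoff1 s u hsx hux).mpr hus.symm
      have hxu1 : ¬ G₁.Adj x u := fun h => huS (hN1S h)
      obtain ⟨G₂, hsl2, hc2, hN₂, hoff2, hE2⟩ := token_step hsN1 hadj1su hxu1 (Ne.symm hux) hc1
      have hoff2' : ∀ p q, p ≠ x → q ≠ x → (G₂.Adj p q ↔ G.Adj p q) :=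
        fun p q hp hq => (hoff2 p q hp hq).trans (hoff1 p q hp hq)
      have huN2 : u ∈ G₂.neighborSet x := by rw [hN₂]; exact Set.mem_insert _ _
      have hcard2 : (G₂.neighborSet x).ncard = (G.neighborSet x).ncard := by
        have hu1 : u ∉ G₁.neighborSet x \ {s} := fun h => huS (hN1S h.1)
        rw [hN₂, Set.ncard_insert_of_notMem hu1 (Set.toFinite _),
          Set.ncard_diff_singleton_add_one hsN1 (Set.toFinite _), hcard1]
      have hsub2 : G₂.neighborSet x ⊆ insert u S := by
        rw [hN₂]
        rintro v (rfl | ⟨hv, -⟩)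
        · exact Set.mem_insert _ _
        · exact Set.mem_insert_of_mem _ (hN1S hv)
      by_cases hz : ∃ z ∈ G₂.neighborSet x, z ≠ u ∧ ¬ G.Adj z u
      · -- direct reduction
        obtain ⟨z, hzN, hzu, hznadj⟩ := hz
        have hzx : z ≠ x := fun h => G₂.irrefl (h ▸ hzN)
        have hz2 : ¬ G₂.Adj z u := fun h => hznadj ((hoff2' z u hzx hux).mp h)
        obtain ⟨G₃, hsl3, hc3, hN₃, hE3⟩ := reduce_step hzN huN2 hz2 hzu hc2
        refine ⟨G₃, (hrt1.tail hsl2).tail hsl3, hc3, ?_, by rw [hE3, hE2, hE1]⟩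
        rw [hN₃, Set.ncard_diff_singleton_add_one hzN (Set.toFinite _), hcard2]
      · push_neg at hz
        have hs'N2 : s' ∉ G₂.neighborSet x := fun h => hnus' ((hz s' h hs'u).symm)
        have hne2 : ((G₂.neighborSet x) \ {u}).Nonempty := by
          rw [← Set.ncard_pos (Set.toFinite _)]
          have := Set.ncard_diff_singleton_add_one huN2 (Set.toFinite _)
          omega
        obtain ⟨z, hz1, hz2⟩ := hne2
        have hzu : z ≠ u := hz2
        have hzS : z ∈ S := by
          rcases hsub2 hz1 with rfl | h
          · exact absurd rfl hzu
          · exact h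
        have hzs'ne : z ≠ s' := fun h => hs'N2 (h ▸ hz1)
        have hzs' : G.Adj z s' := hScl hzS hs'S hzs'ne
        have hzx : z ≠ x := fun h => G₂.irrefl (h ▸ hz1)
        have hadj2zs' : G₂.Adj z s' := (hoff2' z s' hzx hs'x).mpr hzs'
        have hxs'2 : ¬ G₂.Adj x s' := hs'N2
        obtain ⟨G₃, hsl3, hc3, hN₃, hoff3, hE3⟩ :=
          token_step hz1 hadj2zs' hxs'2 (Ne.symm hs'x) hc2
        have hs'N3 : s' ∈ G₃.neighborSet x := by rw [hN₃]; exact Set.mem_insert _ _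
        have huN3 : u ∈ G₃.neighborSet x := by
          rw [hN₃]
          exact Set.mem_insert_of_mem _ ⟨huN2, fun h => hzu h.symm⟩
        have hoff3' : ∀ p q, p ≠ x → q ≠ x → (G₃.Adj p q ↔ G.Adj p q) :=
          fun p q hp hq => (hoff3 p q hp hq).trans (hoff2' p q hp hq)
        have hnadj3 : ¬ G₃.Adj s' u :=
          fun h => hnus' (((hoff3' s' u hs'x hux).mp h).symm)
        obtain ⟨G₄, hsl4, hc4, hN₄, hE4⟩ := reduce_step hs'N3 huN3 hnadj3 hs'u hc3
        refine ⟨G₄, ((hrt1.tail hsl2).tail hsl3).tail hsl4, hc4, ?_,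
          by rw [hE4, hE3, hE2, hE1]⟩
        have hcard3 : (G₃.neighborSet x).ncard = (G.neighborSet x).ncard := by
          have hs'2 : s' ∉ G₂.neighborSet x \ {z} := fun h => hs'N2 h.1
          rw [hN₃, Set.ncard_insert_of_notMem hs'2 (Set.toFinite _),
            Set.ncard_diff_singleton_add_one hz1 (Set.toFinite _), hcard2]
        rw [hN₄, Set.ncard_diff_singleton_add_one hs'N3 (Set.toFinite _), hcard3]

end EdgeSlideAux

/-- A connected graph on `n ≥ 2` vertices with at most `(n-1)(n-2)/2 + 1` edges can be
slid into a connected graph in which a chosen vertex `x` has degree `1`, and deleting `x`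
together with its single incident edge leaves a connected graph. -/
theorem slide_to_pendant_vertex {V : Type*} [Fintype V] (S : SimpleGraph V)
    (hn : 2 ≤ Fintype.card V) (hc : S.Connected) (x : V)
    (hf : Nat.card S.edgeSet ≤ (Fintype.card V - 1) * (Fintype.card V - 2) / 2 + 1) :
    ∃ G' : SimpleGraph V, Relation.ReflTransGen EdgeSlide S G' ∧ G'.Connected ∧
      (G'.neighborSet x).ncard = 1 ∧ (G'.induce {v | v ≠ x}).Connected := by
  open EdgeSlideAux in
  have main : ∀ d (G : SimpleGraph V), G.Connected → (G.neighborSet x).ncard ≤ d + 1 →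
      G.edgeSet.ncard ≤ (Fintype.card V - 1) * (Fintype.card V - 2) / 2 + 1 →
      ∃ G' : SimpleGraph V, Relation.ReflTransGen EdgeSlide G G' ∧ G'.Connected ∧
        (G'.neighborSet x).ncard = 1 ∧ (G'.induce {v | v ≠ x}).Connected := by
    intro d
    induction d with
    | zero =>
      intro G hGc hGd hGf
      -- degree is at least 1 since the graph is connected with ≥ 2 vertices
      have hpos : 1 ≤ (G.neighborSet x).ncard := by
        obtain ⟨v, hvx⟩ := Fintype.exists_ne_of_one_lt_card (by omega) x
        have hne : (G.neighborSet x).Nonempty := by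
          obtain ⟨w⟩ := hGc.preconnected x v
          cases w with
          | nil => exact absurd rfl hvx.symm
          | cons h p => exact ⟨_, h⟩
        rw [← Set.ncard_pos (Set.toFinite _)] at hne
        omega
      have h1 : (G.neighborSet x).ncard = 1 := le_antisymm hGd hpos
      obtain ⟨y, hy⟩ := Set.ncard_eq_one.mp h1
      exact ⟨G, .refl, hGc, h1, pendant_connected hGc hy⟩
    | succ d ih =>
      intro G hGc hGd hGf
      by_cases hsmall : (G.neighborSet x).ncard ≤ d + 1
      · exact ih G hGc hsmall hGf
      · have hd2 : 2 ≤ (G.neighborSet x).ncard := by omega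
        obtain ⟨G₁, hrt, hc1, hcard, hE⟩ := degree_reduce hn hGc hd2 hGf
        obtain ⟨G', hrt', hc', h1, hind⟩ := ih G₁ hc1 (by omega) (by rw [hE]; exact hGf)
        exact ⟨G', hrt.trans hrt', hc', h1, hind⟩
  rw [Nat.card_coe_set_eq] at hf
  exact main (S.neighborSet x).ncard S hc (by omega) hf
end
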